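/- Let 0 < α < 1/2, λ > 0, u₀ ∈ ℝ, and suppose f : ℝ≥0 × ℝ → ℝ is continuous and there exist positive constants c₁, c₃, c₄, c₅ with c₁ ≤ f(s,x) and c₃ ≤ |f(s,x)| ≤ c₄|x| + c₅ for all s, x. If u : (0,β) → ℝ is a continuous solution of u(t) = u₀ + (λ/Γ(2α)) ∫₀ᵗ (t−s)^{2α−1} f(s,u(s))/(∫₀ᵗ f(x,u(x))dx)² ds with β < ∞, then for every τ ∈ (0,β), u is bounded on [τ,β). -/

import Mathlib

open MeasureTheory

set_option maxHeartbeats 1000000 in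

theorem stmt18 (α lam u₀ c₁ c₃ c₄ c₅ β : ℝ) (hα : 0 < α) (hα2 : α < 1/2)
    (hlam : 0 < lam) (hc₁ : 0 < c₁) (hc₃ : 0 < c₃) (hc₄ : 0 < c₄)
    (hc₅ : 0 < c₅) (hβ : 0 < β)
    (f : ℝ → ℝ → ℝ) (hf : Continuous (fun p : ℝ × ℝ => f p.1 p.2))
    (hlb : ∀ s x, 0 ≤ s → c₁ ≤ f s x)
    (hgrowth : ∀ s x, 0 ≤ s → c₃ ≤ |f s x| ∧ |f s x| ≤ c₄ * |x| + c₅)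
    (u : ℝ → ℝ) (hu : ContinuousOn u (Set.Ioo 0 β))
    (heq : ∀ t ∈ Set.Ioo (0:ℝ) β, u t =
      u₀ + (lam / Real.Gamma (2 * α)) *
        ∫ s in (0:ℝ)..t, (t - s) ^ (2 * α - 1) * f s (u s) /
          (∫ x in (0:ℝ)..t, f x (u x)) ^ 2) :
    ∀ τ ∈ Set.Ioo (0:ℝ) β, ∃ B : ℝ, ∀ t ∈ Set.Ico τ β, |u t| ≤ B := by
  intro τ hτ
  obtain ⟨hτ0, hτβ⟩ := hτ
  have hq : (0:ℝ) < 2*α := by linarith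
  have hr1 : (-1:ℝ) < 2*α - 1 := by linarith
  have hrneg : 2*α - 1 ≤ 0 := by linarith
  have hΓ : 0 < Real.Gamma (2*α) := Real.Gamma_pos_of_pos hq
  have hΓ' : 0 < Real.Gamma (2 * α) := hΓ
  set a := τ/2 with ha_def
  have ha0 : 0 < a := by positivity
  have haτ : a < τ := by rw [ha_def]; linarith
  set C := (lam / Real.Gamma (2*α)) / (c₁*τ)^2 with hC_def
  have hCpos : 0 < C := by
    apply div_pos (div_pos hlam hΓ); positivity
  set δ := min (β - τ) ((α / (C*c₄)) ^ (2*α)⁻¹) with hδ_def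
  have hδpos : 0 < δ := lt_min (by linarith) (Real.rpow_pos_of_pos (by positivity) _)
  have hδβτ : δ ≤ β - τ := min_le_left _ _
  have hδsmall : C * c₄ * (δ ^ (2*α)) / (2*α) ≤ 1/2 := by
    have h1 : δ ^ (2*α) ≤ α / (C*c₄) := by
      calc δ ^ (2*α) ≤ ((α / (C*c₄)) ^ (2*α)⁻¹) ^ (2*α) :=
            Real.rpow_le_rpow hδpos.le (min_le_right _ _) hq.le
        _ = α / (C*c₄) := Real.rpow_inv_rpow (by positivity) hq.ne'
    have h2 : C * c₄ * (δ ^ (2*α)) ≤ C * c₄ * (α / (C*c₄)) := by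
      apply mul_le_mul_of_nonneg_left h1 (by positivity)
    have h3 : C * c₄ * (α / (C*c₄)) = α := by field_simp
    have h4 : C * c₄ * δ ^ (2*α) ≤ α := by rw [h3] at h2; exact h2
    rw [div_le_div_iff₀ hq (by norm_num : (0:ℝ) < 2)]
    linarith
  set p := β - δ with hp_def
  have hτp : τ ≤ p := by rw [hp_def]; linarith
  have hpβ : p < β := by rw [hp_def]; linarith
  have hap : a < p := lt_of_lt_of_le haτ hτp
  have hp0 : 0 < p := lt_of_lt_of_le hτ0 hτp
  -- bound on the compact [a, p]
  obtain ⟨M₁, hM₁⟩ : ∃ M, ∀ s ∈ Set.Icc a p, |u s| ≤ M := by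
    have hsub : Set.Icc a p ⊆ Set.Ioo 0 β := fun s hs =>
      ⟨lt_of_lt_of_le ha0 hs.1, lt_of_le_of_lt hs.2 hpβ⟩
    have hcomp : IsCompact ((fun s => |u s|) '' Set.Icc a p) :=
      isCompact_Icc.image_of_continuousOn ((hu.mono hsub).abs)
    obtain ⟨M, hM⟩ := hcomp.bddAbove
    exact ⟨M, fun s hs => hM (Set.mem_image_of_mem _ hs)⟩
  have hM₁0 : 0 ≤ M₁ := le_trans (abs_nonneg _) (hM₁ a ⟨le_refl _, hap.le⟩)
  set K₁ := ∫ s in (0:ℝ)..a, f s (u s) with hK_def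
  have hK₁0 : 0 ≤ K₁ :=
    intervalIntegral.integral_nonneg ha0.le (fun s hs => le_trans hc₁.le (hlb s (u s) hs.1))
  set A := |u₀| + C * ((τ/2) ^ (2*α-1) * K₁ + (c₄*M₁+c₅) * (β ^ (2*α) / (2*α))
      + c₅ * (δ ^ (2*α) / (2*α))) with hA_def
  have hA0 : |u₀| ≤ A := by
    have h1 : 0 ≤ (τ/2) ^ (2*α-1) * K₁ :=
      mul_nonneg (Real.rpow_nonneg (by positivity) _) hK₁0
    have h2 : 0 ≤ (c₄*M₁+c₅) * (β ^ (2*α) / (2*α)) := by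
      apply mul_nonneg (by positivity)
      positivity
    have h3 : 0 ≤ c₅ * (δ ^ (2*α) / (2*α)) := by positivity
    have h4 : 0 ≤ C * ((τ/2) ^ (2*α-1) * K₁ + (c₄*M₁+c₅) * (β ^ (2*α) / (2*α))
        + c₅ * (δ ^ (2*α) / (2*α))) := mul_nonneg hCpos.le (by linarith)
    rw [hA_def]
    linarith
  have hAnn : 0 ≤ A := le_trans (abs_nonneg _) hA0
  clear_value A K₁ p δ C a
  -- sup machinery
  have hSbdd : ∀ t, t < β → BddAbove ((fun s => |u s|) '' Set.Icc p t) := by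
    intro t htβ
    have hsub : Set.Icc p t ⊆ Set.Ioo 0 β := fun s hs =>
      ⟨lt_of_lt_of_le hp0 hs.1, lt_of_le_of_lt hs.2 htβ⟩
    exact (isCompact_Icc.image_of_continuousOn ((hu.mono hsub).abs)).bddAbove
  have hSle : ∀ t, p ≤ t → t < β → ∀ s ∈ Set.Icc p t,
      |u s| ≤ sSup ((fun s => |u s|) '' Set.Icc p t) := by
    intro t hpt htβ s hs
    exact le_csSup (hSbdd t htβ) (Set.mem_image_of_mem _ hs)
  have hS0 : ∀ t, p ≤ t → t < β → 0 ≤ sSup ((fun s => |u s|) '' Set.Icc p t) := by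
    intro t hpt htβ
    exact le_trans (abs_nonneg _) (hSle t hpt htβ p ⟨le_refl _, hpt⟩)
  -- key estimate
  have key : ∀ t, p < t → t < β →
      |u t| ≤ A + 1/2 * sSup ((fun s => |u s|) '' Set.Icc p t) := by
    intro t hpt htβ
    have ht0 : 0 < t := hp0.trans hpt
    have hτt : τ < t := lt_of_le_of_lt hτp hpt
    have hSt0 : 0 ≤ sSup ((fun s => |u s|) '' Set.Icc p t) := hS0 t hpt.le htβ
    have heqt := heq t ⟨ht0, htβ⟩
    set D := ∫ x in (0:ℝ)..t, f x (u x) with hD_def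
    clear_value D
    by_cases hgint : IntervalIntegrable (fun x => f x (u x)) volume 0 t
    · -- D is bounded below
      have hDlb : c₁ * τ ≤ D := by
        have h1 : ∫ x in (0:ℝ)..t, (c₁:ℝ) ≤ ∫ x in (0:ℝ)..t, f x (u x) :=
          intervalIntegral.integral_mono_on ht0.le intervalIntegrable_const hgint
            (fun s hs => hlb s (u s) hs.1)
        rw [intervalIntegral.integral_const, smul_eq_mul] at h1
        have h2 : c₁ * τ ≤ (t - 0) * c₁ := by nlinarith
        rw [hD_def]
        linarith
      have hDpos : (0:ℝ) < D := lt_of_lt_of_le (by positivity) hDlb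
      have hD2 : (c₁*τ)^2 ≤ D^2 := by
        have := pow_le_pow_left₀ (by positivity : (0:ℝ) ≤ c₁*τ) hDlb 2
        exact this
      have hD2pos : (0:ℝ) < D^2 := by positivity
      by_cases hFint : IntervalIntegrable
          (fun s => (t - s) ^ (2 * α - 1) * f s (u s) / D ^ 2) volume 0 t
      · -- main case
        set S := sSup ((fun s => |u s|) '' Set.Icc p t) with hS_def
        have hkeq : (fun s => (t - s) ^ (2 * α - 1) * f s (u s) / D ^ 2 * D ^ 2)
            = fun s => (t - s) ^ (2 * α - 1) * f s (u s) := by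
          funext s; field_simp
        have hkint : IntervalIntegrable (fun s => (t - s) ^ (2 * α - 1) * f s (u s)) volume 0 t := by
          have h2 := hFint.mul_const (D ^ 2)
          rwa [hkeq] at h2
        have hknn : ∀ s ∈ Set.Icc (0:ℝ) t, 0 ≤ (t - s) ^ (2 * α - 1) * f s (u s) := by
          intro s hs
          exact mul_nonneg (Real.rpow_nonneg (by linarith [hs.2]) _)
            (le_trans hc₁.le (hlb s (u s) hs.1))
        have hksub : ∀ x y : ℝ, 0 ≤ x → x ≤ y → y ≤ t →
            IntervalIntegrable (fun s => (t - s) ^ (2 * α - 1) * f s (u s)) volume x y := by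
          intro x y hx hxy hyt
          refine hkint.mono_set ?_
          rw [Set.uIcc_of_le hxy, Set.uIcc_of_le ht0.le]
          exact Set.Icc_subset_Icc hx hyt
        have hgsub : ∀ x y : ℝ, 0 ≤ x → x ≤ y → y ≤ t →
            IntervalIntegrable (fun s => f s (u s)) volume x y := by
          intro x y hx hxy hyt
          refine hgint.mono_set ?_
          rw [Set.uIcc_of_le hxy, Set.uIcc_of_le ht0.le]
          exact Set.Icc_subset_Icc hx hyt
        have hkernint : ∀ x y : ℝ,
            IntervalIntegrable (fun s => (t - s) ^ (2 * α - 1)) volume x y := by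
          intro x y
          have h1 := (intervalIntegral.intervalIntegrable_rpow' hr1
            (a := t - x) (b := t - y)).comp_sub_left t
          simpa using h1
        have hkern : ∀ x y : ℝ, (∫ s in x..y, (t - s) ^ (2 * α - 1))
            = ((t - x) ^ (2*α) - (t - y) ^ (2*α)) / (2*α) := by
          intro x y
          rw [intervalIntegral.integral_comp_sub_left (fun z => z ^ (2 * α - 1)) t,
              integral_rpow (Or.inl hr1)]
          norm_num
        have hI1 : (∫ s in (0:ℝ)..a, (t - s) ^ (2 * α - 1) * f s (u s))
            ≤ (τ/2) ^ (2*α-1) * K₁ := by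
          have hmono : (∫ s in (0:ℝ)..a, (t - s) ^ (2 * α - 1) * f s (u s))
              ≤ ∫ s in (0:ℝ)..a, (τ/2) ^ (2*α-1) * f s (u s) := by
            apply intervalIntegral.integral_mono_on ha0.le
              (hksub 0 a le_rfl ha0.le (by linarith))
              ((hgsub 0 a le_rfl ha0.le (by linarith)).const_mul _)
            intro s hs
            apply mul_le_mul_of_nonneg_right _ (le_trans hc₁.le (hlb s (u s) hs.1))
            apply Real.rpow_le_rpow_of_nonpos (by linarith) _ hrneg
            have hsa : s ≤ τ/2 := by rw [← ha_def]; exact hs.2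
            linarith
          rwa [intervalIntegral.integral_const_mul, ← hK_def] at hmono
        have hI2 : (∫ s in a..p, (t - s) ^ (2 * α - 1) * f s (u s))
            ≤ (c₄*M₁+c₅) * (β ^ (2*α) / (2*α)) := by
          have hmono : (∫ s in a..p, (t - s) ^ (2 * α - 1) * f s (u s))
              ≤ ∫ s in a..p, (t - s) ^ (2 * α - 1) * (c₄*M₁+c₅) := by
            apply intervalIntegral.integral_mono_on hap.le
              (hksub a p ha0.le hap.le (by linarith))
              ((hkernint a p).mul_const _)
            intro s hs
            have hs0 : (0:ℝ) ≤ s := le_trans ha0.le hs.1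
            apply mul_le_mul_of_nonneg_left _ (Real.rpow_nonneg (by linarith [hs.2]) _)
            calc f s (u s) ≤ |f s (u s)| := le_abs_self _
              _ ≤ c₄ * |u s| + c₅ := (hgrowth s (u s) hs0).2
              _ ≤ c₄ * M₁ + c₅ := by
                  have h5 := mul_le_mul_of_nonneg_left (hM₁ s hs) hc₄.le
                  linarith
          rw [intervalIntegral.integral_mul_const, hkern a p] at hmono
          have h1 : (t-a)^(2*α) ≤ β^(2*α) := Real.rpow_le_rpow (by linarith) (by linarith) hq.le
          have h2 : 0 ≤ (t-p)^(2*α) := Real.rpow_nonneg (by linarith) _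
          have h3 : ((t-a)^(2*α) - (t-p)^(2*α))/(2*α) ≤ β^(2*α)/(2*α) := by
            gcongr
            linarith
          have h4 : ((t-a)^(2*α) - (t-p)^(2*α))/(2*α) * (c₄*M₁+c₅)
              ≤ β^(2*α)/(2*α) * (c₄*M₁+c₅) :=
            mul_le_mul_of_nonneg_right h3 (by positivity)
          calc (∫ s in a..p, (t - s) ^ (2 * α - 1) * f s (u s))
              ≤ β^(2*α)/(2*α) * (c₄*M₁+c₅) := le_trans hmono h4
            _ = (c₄*M₁+c₅) * (β ^ (2*α) / (2*α)) := mul_comm _ _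
        have hI3 : (∫ s in p..t, (t - s) ^ (2 * α - 1) * f s (u s))
            ≤ (c₄*S+c₅) * (δ ^ (2*α) / (2*α)) := by
          have hmono : (∫ s in p..t, (t - s) ^ (2 * α - 1) * f s (u s))
              ≤ ∫ s in p..t, (t - s) ^ (2 * α - 1) * (c₄*S+c₅) := by
            apply intervalIntegral.integral_mono_on hpt.le
              (hksub p t hp0.le hpt.le le_rfl)
              ((hkernint p t).mul_const _)
            intro s hs
            have hs0 : (0:ℝ) ≤ s := le_trans hp0.le hs.1
            apply mul_le_mul_of_nonneg_left _ (Real.rpow_nonneg (by linarith [hs.2]) _)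
            calc f s (u s) ≤ |f s (u s)| := le_abs_self _
              _ ≤ c₄ * |u s| + c₅ := (hgrowth s (u s) hs0).2
              _ ≤ c₄ * S + c₅ := by
                  have h5 := mul_le_mul_of_nonneg_left (hSle t hpt.le htβ s hs) hc₄.le
                  linarith
          rw [intervalIntegral.integral_mul_const, hkern p t] at hmono
          have hz : (t - t : ℝ) ^ (2*α) = 0 := by
            rw [sub_self, Real.zero_rpow hq.ne']
          rw [hz] at hmono
          have htpδ : t - p ≤ δ := by rw [hp_def]; linarith
          have h1 : (t-p)^(2*α) ≤ δ^(2*α) := Real.rpow_le_rpow (by linarith) htpδ hq.le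
          have h3 : ((t-p)^(2*α) - 0)/(2*α) ≤ δ^(2*α)/(2*α) := by
            gcongr
            linarith
          have h4 : ((t-p)^(2*α) - 0)/(2*α) * (c₄*S+c₅) ≤ δ^(2*α)/(2*α) * (c₄*S+c₅) := by
            apply mul_le_mul_of_nonneg_right h3
            have := hSt0
            positivity
          calc (∫ s in p..t, (t - s) ^ (2 * α - 1) * f s (u s))
              ≤ δ^(2*α)/(2*α) * (c₄*S+c₅) := le_trans hmono h4
            _ = (c₄*S+c₅) * (δ ^ (2*α) / (2*α)) := mul_comm _ _
        have hsplit : (∫ s in (0:ℝ)..a, (t - s) ^ (2 * α - 1) * f s (u s))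
            + (∫ s in a..p, (t - s) ^ (2 * α - 1) * f s (u s))
            + (∫ s in p..t, (t - s) ^ (2 * α - 1) * f s (u s))
            = ∫ s in (0:ℝ)..t, (t - s) ^ (2 * α - 1) * f s (u s) := by
          rw [intervalIntegral.integral_add_adjacent_intervals
              (hksub 0 a le_rfl ha0.le (by linarith)) (hksub a p ha0.le hap.le (by linarith)),
            intervalIntegral.integral_add_adjacent_intervals
              (hksub 0 p le_rfl hp0.le (by linarith)) (hksub p t hp0.le hpt.le le_rfl)]
        have hFle : ∀ s ∈ Set.Icc (0:ℝ) t,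
            (t - s) ^ (2 * α - 1) * f s (u s) / D ^ 2
              ≤ (t - s) ^ (2 * α - 1) * f s (u s) / (c₁*τ)^2 := by
          intro s hs
          have h9 : (0:ℝ) < (c₁*τ)^2 := by positivity
          exact div_le_div_of_nonneg_left (hknn s hs) h9 hD2
        have hIF1 : (∫ s in (0:ℝ)..t, (t - s) ^ (2 * α - 1) * f s (u s) / D ^ 2)
            ≤ (∫ s in (0:ℝ)..t, (t - s) ^ (2 * α - 1) * f s (u s)) / (c₁*τ)^2 := by
          have h := intervalIntegral.integral_mono_on ht0.le hFint
            (hkint.div_const ((c₁*τ)^2)) hFle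
          exact h.trans (le_of_eq (intervalIntegral.integral_div _ _))
        have hIFnn : 0 ≤ ∫ s in (0:ℝ)..t, (t - s) ^ (2 * α - 1) * f s (u s) / D ^ 2 :=
          intervalIntegral.integral_nonneg ht0.le
            (fun s hs => div_nonneg (hknn s hs) (sq_nonneg D))
        have hkle : (∫ s in (0:ℝ)..t, (t - s) ^ (2 * α - 1) * f s (u s))
            ≤ (τ/2)^(2*α-1)*K₁ + (c₄*M₁+c₅)*(β^(2*α)/(2*α)) + (c₄*S+c₅)*(δ^(2*α)/(2*α)) := by
          rw [← hsplit]; linarith [hI1, hI2, hI3]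
        have hstep : lam / Real.Gamma (2*α)
              * (∫ s in (0:ℝ)..t, (t - s) ^ (2 * α - 1) * f s (u s) / D ^ 2)
            ≤ C * (∫ s in (0:ℝ)..t, (t - s) ^ (2 * α - 1) * f s (u s)) := by
          calc lam / Real.Gamma (2*α)
              * (∫ s in (0:ℝ)..t, (t - s) ^ (2 * α - 1) * f s (u s) / D ^ 2)
              ≤ lam / Real.Gamma (2*α)
                * ((∫ s in (0:ℝ)..t, (t - s) ^ (2 * α - 1) * f s (u s)) / (c₁*τ)^2) :=
              mul_le_mul_of_nonneg_left hIF1 (by positivity)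
            _ = C * (∫ s in (0:ℝ)..t, (t - s) ^ (2 * α - 1) * f s (u s)) := by
              rw [hC_def]; ring
        have hfin : C * (∫ s in (0:ℝ)..t, (t - s) ^ (2 * α - 1) * f s (u s))
            ≤ C * ((τ/2)^(2*α-1)*K₁ + (c₄*M₁+c₅)*(β^(2*α)/(2*α)) + (c₄*S+c₅)*(δ^(2*α)/(2*α))) :=
          mul_le_mul_of_nonneg_left hkle hCpos.le
        have hAexp : C * ((τ/2)^(2*α-1)*K₁ + (c₄*M₁+c₅)*(β^(2*α)/(2*α))
              + (c₄*S+c₅)*(δ^(2*α)/(2*α)))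
            = (A - |u₀|) + (C * c₄ * δ^(2*α) / (2*α)) * S := by
          rw [hA_def]; ring
        have hfin' : C * (∫ s in (0:ℝ)..t, (t - s) ^ (2 * α - 1) * f s (u s))
            ≤ (A - |u₀|) + (C * c₄ * δ^(2*α) / (2*α)) * S := hAexp ▸ hfin
        have hlast : (C * c₄ * δ^(2*α) / (2*α)) * S ≤ 1/2 * S :=
          mul_le_mul_of_nonneg_right hδsmall hSt0
        rw [heqt]
        have habs : |u₀ + lam / Real.Gamma (2 * α)
              * ∫ s in (0:ℝ)..t, (t - s) ^ (2 * α - 1) * f s (u s) / D ^ 2|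
            ≤ |u₀| + lam / Real.Gamma (2 * α)
              * ∫ s in (0:ℝ)..t, (t - s) ^ (2 * α - 1) * f s (u s) / D ^ 2 := by
          refine le_trans (abs_add_le _ _) ?_
          rw [abs_of_nonneg (mul_nonneg (by positivity) hIFnn)]
        linarith [habs, hstep, hfin', hlast]
      · -- integral undefined, u t = u₀
        rw [intervalIntegral.integral_undef hFint, mul_zero, add_zero] at heqt
        rw [heqt]
        linarith
    · -- D = 0
      have hD0 : D = 0 := by rw [hD_def]; exact intervalIntegral.integral_undef hgint
      rw [hD0] at heqt
      simp only [ne_eq, OfNat.ofNat_ne_zero, not_false_eq_true, zero_pow, div_zero,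
        intervalIntegral.integral_zero, mul_zero, add_zero] at heqt
      rw [heqt]
      linarith
  -- final assembly
  set A' := max A M₁ with hA'_def
  have hA'0 : 0 ≤ A' := le_trans hM₁0 (le_max_right _ _)
  have claim : ∀ t, p ≤ t → t < β → sSup ((fun s => |u s|) '' Set.Icc p t) ≤ 2 * A' := by
    intro t hpt htβ
    have hsub : Set.Icc p t ⊆ Set.Ioo 0 β := fun s hs =>
      ⟨lt_of_lt_of_le hp0 hs.1, lt_of_le_of_lt hs.2 htβ⟩
    have hcomp : IsCompact ((fun s => |u s|) '' Set.Icc p t) :=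
      isCompact_Icc.image_of_continuousOn ((hu.mono hsub).abs)
    have hne : ((fun s => |u s|) '' Set.Icc p t).Nonempty :=
      ⟨|u p|, Set.mem_image_of_mem _ ⟨le_refl _, hpt⟩⟩
    obtain ⟨s₀, hs₀, hSeq⟩ := hcomp.sSup_mem hne
    simp only at hSeq
    rcases eq_or_lt_of_le hs₀.1 with hps₀ | hps₀
    · have hm : |u s₀| ≤ M₁ := hM₁ s₀ ⟨by rw [← hps₀]; exact hap.le, by rw [← hps₀]⟩
      have h2 := le_max_right A M₁
      rw [← hA'_def] at h2
      linarith [hSeq, hA'0]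
    · have hkey := key s₀ hps₀ (lt_of_le_of_lt hs₀.2 htβ)
      have hmono : sSup ((fun s => |u s|) '' Set.Icc p s₀)
          ≤ sSup ((fun s => |u s|) '' Set.Icc p t) :=
        csSup_le_csSup (hSbdd t htβ)
          ⟨|u p|, Set.mem_image_of_mem _ ⟨le_refl _, hps₀.le⟩⟩
          (Set.image_mono (Set.Icc_subset_Icc_right hs₀.2))
      have h2 := le_max_left A M₁
      rw [← hA'_def] at h2
      linarith [hkey, hmono, hSeq]
  refine ⟨max M₁ (2*A'), ?_⟩
  rintro t ⟨hτt, htβ⟩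
  by_cases htp : t ≤ p
  · refine le_trans (hM₁ t ⟨?_, htp⟩) (le_max_left _ _)
    rw [ha_def]; linarith
  · push_neg at htp
    have h1 : |u t| ≤ sSup ((fun s => |u s|) '' Set.Icc p t) :=
      hSle t htp.le htβ t ⟨htp.le, le_refl _⟩
    exact le_trans (le_trans h1 (claim t htp.le htβ)) (le_max_right _ _)
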